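/- Let J := ⋃_{j=1}^d (a_j, b_j) with d ≥ 1 be a finite union of bounded open intervals with disjoint closures, and let c : J → ℝ be bounded. Let u : ℝ → ℝ be bounded and continuous, with u ≥ 0 on ℝ∖J, such that for every x ∈ J the principal-value limit defining (−Δ)^{1/2}u(x) exists and satisfies (−Δ)^{1/2}u(x) − c(x)·u(x) ≥ 0. Suppose there exists a bounded continuous z : ℝ → ℝ with z > 0 on cl J, z ≥ 0 on ℝ∖J, and such that for every x ∈ J the principal-value limit defining (−Δ)^{1/2}z(x) exists and satisfies (−Δ)^{1/2}z(x) − c(x)·z(x) ≥ 0. Then u ≥ 0 on ℝ, and moreover either u > 0 everywhere in J or u is identically 0 on ℝ. -/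

import Mathlib

open MeasureTheory Filter Set

/-- The truncated integral appearing in the principal-value definition of the
half-Laplacian: `(1/π) ∫_{|z| ≥ δ} (u(x) - u(x+z))/z² dz`. -/
noncomputable def pvHalfLap (u : ℝ → ℝ) (x δ : ℝ) : ℝ :=
  (1 / Real.pi) * ∫ z in {z : ℝ | δ ≤ |z|}, (u x - u (x + z)) / z ^ 2

/-- `HasHalfLapAt u x L` means that the principal-value limit defining
`(-Δ)^{1/2} u (x)` exists and equals `L`. -/
def HasHalfLapAt (u : ℝ → ℝ) (x L : ℝ) : Prop :=
  Tendsto (fun δ => pvHalfLap u x δ) (nhdsWithin 0 (Ioi 0)) (nhds L)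

lemma absSet_eq (δ : ℝ) : {ζ : ℝ | δ ≤ |ζ|} = Iic (-δ) ∪ Ici δ := by
  ext ζ
  simp only [mem_setOf_eq, mem_union, mem_Iic, mem_Ici, le_abs]
  constructor
  · rintro (h | h)
    · right; exact h
    · left; linarith
  · rintro (h | h)
    · right; linarith
    · left; exact h

lemma measurableSet_absSet (δ : ℝ) : MeasurableSet {ζ : ℝ | δ ≤ |ζ|} := by
  rw [absSet_eq]; exact measurableSet_Iic.union measurableSet_Ici

lemma integrableOn_inv_sq {δ : ℝ} (hδ : 0 < δ) :
    IntegrableOn (fun ζ : ℝ => 1 / ζ ^ 2) {ζ : ℝ | δ ≤ |ζ|} := by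
  have hIoi : IntegrableOn (fun ζ : ℝ => 1 / ζ ^ 2) (Ioi δ) := by
    refine (integrableOn_Ioi_rpow_of_lt (by norm_num : (-2:ℝ) < -1) hδ).congr_fun
      (fun x hx => ?_) measurableSet_Ioi
    have hx0 : (0:ℝ) < x := lt_trans hδ hx
    show x ^ (-2:ℝ) = 1 / x ^ 2
    rw [show (-2:ℝ) = -(2:ℝ) by norm_num, Real.rpow_neg hx0.le, Real.rpow_two, one_div]
  have hIci : IntegrableOn (fun ζ : ℝ => 1 / ζ ^ 2) (Ici δ) :=
    (integrableOn_Ici_iff_integrableOn_Ioi (by exact enorm_ne_top)).2 hIoi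
  have hIic : IntegrableOn (fun ζ : ℝ => 1 / ζ ^ 2) (Iic (-δ)) := by
    rw [← (Measure.measurePreserving_neg (volume : Measure ℝ)).integrableOn_comp_preimage
        (Homeomorph.neg ℝ).measurableEmbedding]
    simp only [Function.comp_def, neg_sq, neg_preimage, neg_Iic, neg_neg]
    exact hIci
  rw [absSet_eq]
  exact hIic.union hIci

lemma aesm_quot {w : ℝ → ℝ} (hwc : Continuous w) (x : ℝ) (s : Set ℝ) :
    AEStronglyMeasurable (fun ζ : ℝ => w (x + ζ) / ζ ^ 2) (volume.restrict s) :=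
  (((hwc.comp (continuous_const.add continuous_id)).measurable).div
    ((measurable_id.pow_const 2))).aestronglyMeasurable

lemma integrableOn_quot {w : ℝ → ℝ} {M : ℝ} (hw : ∀ y, |w y| ≤ M) (hwc : Continuous w)
    (x : ℝ) {δ : ℝ} (hδ : 0 < δ) :
    IntegrableOn (fun ζ : ℝ => w (x + ζ) / ζ ^ 2) {ζ : ℝ | δ ≤ |ζ|} := by
  have hM : 0 ≤ M := le_trans (abs_nonneg _) (hw 0)
  refine Integrable.mono ((integrableOn_inv_sq hδ).const_mul M) (aesm_quot hwc x _) ?_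
  refine Eventually.of_forall (fun ζ => ?_)
  simp only [norm_div, Real.norm_eq_abs, norm_mul]
  rw [abs_of_nonneg hM, abs_one, mul_one_div]
  gcongr
  exact hw _

lemma integrableOn_integrand {w : ℝ → ℝ} {M : ℝ} (hw : ∀ y, |w y| ≤ M) (hwc : Continuous w)
    (x : ℝ) {δ : ℝ} (hδ : 0 < δ) :
    IntegrableOn (fun ζ : ℝ => (w x - w (x + ζ)) / ζ ^ 2) {ζ : ℝ | δ ≤ |ζ|} := by
  have h1 := ((integrableOn_inv_sq hδ).const_mul (w x))
  have h2 := integrableOn_quot hw hwc x hδ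
  have h3 : IntegrableOn (fun ζ : ℝ => w x * (1 / ζ ^ 2) - w (x + ζ) / ζ ^ 2)
      {ζ : ℝ | δ ≤ |ζ|} := h1.sub h2
  refine h3.congr_fun (fun ζ _ => ?_) (measurableSet_absSet δ)
  ring

/-- Key lemma: a nonnegative bounded continuous function whose half-Laplacian at an
interior zero is ≥ 0 must vanish identically. -/
lemma key_lemma (v : ℝ → ℝ) (M : ℝ) (hb : ∀ y, |v y| ≤ M) (hvc : Continuous v)
    (hnn : ∀ y, 0 ≤ v y) (x0 : ℝ) (h0 : v x0 = 0) (L : ℝ)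
    (hL : HasHalfLapAt v x0 L) (hLnn : 0 ≤ L) : ∀ x, v x = 0 := by
  set I : ℝ → ℝ := fun δ => ∫ ζ in {ζ : ℝ | δ ≤ |ζ|}, v (x0 + ζ) / ζ ^ 2 with hIdef
  have hpv : ∀ δ, pvHalfLap v x0 δ = -(1 / Real.pi) * I δ := by
    intro δ
    rw [pvHalfLap, hIdef]
    have : ∀ ζ : ℝ, (v x0 - v (x0 + ζ)) / ζ ^ 2 = -(v (x0 + ζ) / ζ ^ 2) := by
      intro ζ; rw [h0]; ring
    simp_rw [this, integral_neg]
    ring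
  have hInn : ∀ δ, 0 ≤ I δ := by
    intro δ
    exact setIntegral_nonneg (measurableSet_absSet δ)
      (fun ζ _ => div_nonneg (hnn _) (sq_nonneg ζ))
  have hpi : (0:ℝ) < 1 / Real.pi := by positivity
  -- L ≤ 0
  have hLle : L ≤ 0 := by
    refine le_of_tendsto hL (Eventually.of_forall (fun δ => ?_))
    rw [hpv]
    have := hInn δ
    nlinarith
  have hL0 : L = 0 := le_antisymm hLle hLnn
  have hItend : Tendsto I (nhdsWithin 0 (Ioi 0)) (nhds 0) := by
    have h1 : Tendsto (fun δ => (-Real.pi) * pvHalfLap v x0 δ) (nhdsWithin 0 (Ioi 0))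
        (nhds ((-Real.pi) * L)) := hL.const_mul _
    rw [hL0, mul_zero] at h1
    refine h1.congr (fun δ => ?_)
    rw [hpv]
    field_simp
  -- each I δ0 = 0
  have hIzero : ∀ δ0 : ℝ, 0 < δ0 → I δ0 = 0 := by
    intro δ0 hδ0
    refine le_antisymm ?_ (hInn δ0)
    refine ge_of_tendsto hItend ?_
    have hmem : Ioo (0:ℝ) δ0 ∈ nhdsWithin (0:ℝ) (Ioi 0) := by
      refine mem_nhdsWithin.2 ⟨Iio δ0, isOpen_Iio, hδ0, ?_⟩
      rintro x ⟨hx1, hx2⟩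
      exact ⟨hx2, hx1⟩
    filter_upwards [hmem] with δ hδ
    refine setIntegral_mono_set (integrableOn_quot hb hvc x0 hδ.1)
      (Eventually.of_forall (fun ζ => div_nonneg (hnn _) (sq_nonneg ζ)))
      (HasSubset.Subset.eventuallyLE ?_)
    intro ζ hζ
    exact le_trans hδ.2.le hζ
  -- a.e. vanishing
  have hae : ∀ n : ℕ, ∀ᵐ ζ : ℝ, ζ ∈ {ζ : ℝ | 1/(n+1:ℝ) ≤ |ζ|} → v (x0 + ζ) / ζ ^ 2 = 0 := by
    intro n
    have hn : (0:ℝ) < 1/(n+1:ℝ) := by positivity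
    have hint := integrableOn_quot hb hvc x0 hn
    have := (integral_eq_zero_iff_of_nonneg (fun ζ => div_nonneg (hnn _) (sq_nonneg ζ))
      hint).1 (hIzero _ hn)
    rw [EventuallyEq, ae_restrict_iff' (measurableSet_absSet _)] at this
    filter_upwards [this] with ζ h h2 using h h2
  have haene : ∀ᵐ ζ : ℝ, ζ ≠ 0 := by
    rw [ae_iff]
    have : {ζ : ℝ | ¬ ζ ≠ 0} = {0} := by ext ζ; simp
    rw [this]
    exact Real.volume_singleton
  have haev : (fun ζ : ℝ => v (x0 + ζ)) =ᵐ[volume] 0 := by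
    rw [EventuallyEq]
    filter_upwards [ae_all_iff.2 hae, haene] with ζ h hζ
    obtain ⟨n, hn⟩ := exists_nat_one_div_lt (abs_pos.2 hζ)
    have := h n (le_of_lt hn)
    have h2 : ζ ^ 2 ≠ 0 := pow_ne_zero 2 hζ
    rcases div_eq_zero_iff.1 this with h3 | h3
    · exact h3
    · exact absurd h3 h2
  have := (Continuous.ae_eq_iff_eq volume (hvc.comp (continuous_const.add continuous_id))
    continuous_const).1 haev
  intro x
  have hx := congrFun this (x - x0)
  have e : x0 + (x - x0) = x := by ring
  rw [← e]
  exact hx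

lemma hasHalfLapAt_sub_smul {u z : ℝ → ℝ} {Mu Mz : ℝ}
    (hu : ∀ y, |u y| ≤ Mu) (hz : ∀ y, |z y| ≤ Mz)
    (huc : Continuous u) (hzc : Continuous z) (m x Lu Lz : ℝ)
    (h1 : HasHalfLapAt u x Lu) (h2 : HasHalfLapAt z x Lz) :
    HasHalfLapAt (fun y => u y - m * z y) x (Lu - m * Lz) := by
  have h : Tendsto (fun δ => pvHalfLap u x δ - m * pvHalfLap z x δ) (nhdsWithin 0 (Ioi 0))
      (nhds (Lu - m * Lz)) := h1.sub ((h2.const_mul m))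
  refine Tendsto.congr' ?_ h
  filter_upwards [self_mem_nhdsWithin] with δ (hδ : 0 < δ)
  have hiu := integrableOn_integrand hu huc x hδ
  have hiz := integrableOn_integrand hz hzc x hδ
  rw [pvHalfLap, pvHalfLap, pvHalfLap]
  have : ∀ ζ : ℝ, ((fun y => u y - m * z y) x - (fun y => u y - m * z y) (x + ζ)) / ζ ^ 2
      = (u x - u (x + ζ)) / ζ ^ 2 - m * ((z x - z (x + ζ)) / ζ ^ 2) := by
    intro ζ; ring
  simp_rw [this]
  rw [integral_sub hiu (hiz.const_mul m), integral_const_mul]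
  ring

/-- Strong maximum principle for `(-Δ)^{1/2} - c` in a finite union `J` of bounded open
intervals with disjoint closures, in the presence of a positive supersolution `z`. -/
theorem strong_maximum_principle
    (d : ℕ) (hd : 1 ≤ d) (a b : Fin d → ℝ)
    (hab : ∀ k, a k < b k) (hord : ∀ k l : Fin d, k < l → b k < a l)
    (J : Set ℝ) (hJ : J = ⋃ k, Ioo (a k) (b k))
    (c : ℝ → ℝ) (hc : ∃ M : ℝ, ∀ x ∈ J, |c x| ≤ M)
    (u : ℝ → ℝ) (hu_bdd : ∃ M : ℝ, ∀ x, |u x| ≤ M) (hu_cont : Continuous u)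
    (hu_out : ∀ x ∉ J, 0 ≤ u x)
    (hu_super : ∀ x ∈ J, ∃ L : ℝ, HasHalfLapAt u x L ∧ 0 ≤ L - c x * u x)
    (z : ℝ → ℝ) (hz_bdd : ∃ M : ℝ, ∀ x, |z x| ≤ M) (hz_cont : Continuous z)
    (hz_pos : ∀ x ∈ closure J, 0 < z x) (hz_out : ∀ x ∉ J, 0 ≤ z x)
    (hz_super : ∀ x ∈ J, ∃ L : ℝ, HasHalfLapAt z x L ∧ 0 ≤ L - c x * z x) :
    (∀ x, 0 ≤ u x) ∧ ((∀ x ∈ J, 0 < u x) ∨ ∀ x, u x = 0) := by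
  obtain ⟨Mu, hMu⟩ := hu_bdd
  obtain ⟨Mz, hMz⟩ := hz_bdd
  set K := closure J with hK
  set k0 : Fin d := ⟨0, hd⟩ with hk0
  -- a k0 ∉ J
  have ha_notin : a k0 ∉ J := by
    rw [hJ]
    intro h
    obtain ⟨k, hk⟩ := mem_iUnion.1 h
    rcases Nat.eq_zero_or_pos k.val with h0 | h0
    · have hkk : k = k0 := Fin.ext h0
      rw [hkk] at hk
      exact absurd hk.1 (lt_irrefl _)
    · have hlt : k0 < k := by
        rw [Fin.lt_def]; exact h0
      have h1 := hord k0 k hlt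
      have h2 := hab k0
      have h3 := hk.1
      linarith
  have ha_inK : a k0 ∈ K := by
    have h1 : a k0 ∈ closure (Ioo (a k0) (b k0)) := by
      rw [closure_Ioo (hab k0).ne]
      exact ⟨le_refl _, (hab k0).le⟩
    have h2 : Ioo (a k0) (b k0) ⊆ J := by
      rw [hJ]; exact subset_iUnion (fun k => Ioo (a k) (b k)) k0
    exact closure_mono h2 h1
  -- compactness of K
  have hKbdd : Bornology.IsBounded J := by
    rw [hJ]
    exact Bornology.isBounded_iUnion.2 (fun k => Metric.isBounded_Ioo _ _)
  have hKcomp : IsCompact K := by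
    rw [hK]
    exact Metric.isCompact_of_isClosed_isBounded isClosed_closure hKbdd.closure
  have hKne : K.Nonempty := ⟨a k0, ha_inK⟩
  have hJK : J ⊆ K := subset_closure
  -- min of u/z on K
  have hcont : ContinuousOn (fun x => u x / z x) K :=
    (hu_cont.continuousOn).div (hz_cont.continuousOn) (fun x hx => (hz_pos x hx).ne')
  obtain ⟨x0, hx0K, hx0min⟩ := hKcomp.exists_isMinOn hKne hcont
  set m := u x0 / z x0 with hm
  have hpart1 : ∀ x, 0 ≤ u x := by
    by_cases hm0 : 0 ≤ m
    · intro x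
      by_cases hxJ : x ∈ J
      · have hxK := hJK hxJ
        have h1 : m ≤ u x / z x := hx0min hxK
        have h2 : 0 < z x := hz_pos x hxK
        have h3 : m * z x ≤ u x := (le_div_iff₀ h2).1 h1
        nlinarith
      · exact hu_out x hxJ
    · -- m < 0: contradiction
      exfalso
      push_neg at hm0
      have hx0J : x0 ∈ J := by
        by_contra hx0J
        have h1 := hu_out x0 hx0J
        have h2 := hz_pos x0 hx0K
        have : 0 ≤ m := div_nonneg h1 h2.le
        linarith
      set v : ℝ → ℝ := fun y => u y - m * z y with hv
      have hvnn : ∀ y, 0 ≤ v y := by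
        intro y
        by_cases hyJ : y ∈ J
        · have hyK := hJK hyJ
          have h1 : m ≤ u y / z y := hx0min hyK
          have h2 : 0 < z y := hz_pos y hyK
          rw [hv]
          simp only
          rw [sub_nonneg]
          calc m * z y ≤ (u y / z y) * z y := by
                exact mul_le_mul_of_nonneg_right h1 h2.le
            _ = u y := div_mul_cancel₀ _ h2.ne'
        · have h1 := hu_out y hyJ
          have h2 := hz_out y hyJ
          rw [hv]; simp only
          nlinarith
      have hv0 : v x0 = 0 := by
        rw [hv]; simp only
        rw [hm, div_mul_cancel₀ _ (hz_pos x0 hx0K).ne', sub_self]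
      have hvb : ∀ y, |v y| ≤ Mu + |m| * Mz := by
        intro y
        rw [hv]; simp only
        calc |u y - m * z y| ≤ |u y| + |m * z y| := abs_sub _ _
          _ ≤ Mu + |m| * Mz := by
              rw [abs_mul]
              exact add_le_add (hMu y) (mul_le_mul_of_nonneg_left (hMz y) (abs_nonneg m))
      have hvc : Continuous v := hu_cont.sub (continuous_const.mul hz_cont)
      obtain ⟨Lu, hLu, hLu2⟩ := hu_super x0 hx0J
      obtain ⟨Lz, hLz, hLz2⟩ := hz_super x0 hx0J
      have hvlap : HasHalfLapAt v x0 (Lu - m * Lz) :=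
        hasHalfLapAt_sub_smul hMu hMz hu_cont hz_cont m x0 Lu Lz hLu hLz
      have hzval : u x0 - m * z x0 = 0 := by
        rw [hm, div_mul_cancel₀ _ (hz_pos x0 hx0K).ne', sub_self]
      have h4 : 0 ≤ (-m) * (Lz - c x0 * z x0) := mul_nonneg (by linarith) hLz2
      have h5 : c x0 * (u x0 - m * z x0) = 0 := by rw [hzval]; ring
      have hLnn : 0 ≤ Lu - m * Lz := by nlinarith [h4, hLu2, h5]
      have hvz := key_lemma v _ hvb hvc hvnn x0 hv0 _ hvlap hLnn
      -- v ≡ 0 ⇒ u (a k0) = m * z (a k0) < 0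
      have := hvz (a k0)
      rw [hv] at this; simp only at this
      have hzpos := hz_pos (a k0) ha_inK
      have huge := hu_out (a k0) ha_notin
      nlinarith
  refine ⟨hpart1, ?_⟩
  by_cases hall : ∀ x ∈ J, 0 < u x
  · exact Or.inl hall
  · push_neg at hall
    obtain ⟨x1, hx1J, hx1⟩ := hall
    have hu1 : u x1 = 0 := le_antisymm hx1 (hpart1 x1)
    obtain ⟨L, hLlap, hL2⟩ := hu_super x1 hx1J
    have hLnn : 0 ≤ L := by
      have := hL2
      rw [hu1] at this
      linarith [this]
    exact Or.inr (key_lemma u Mu hMu hu_cont hpart1 x1 hu1 L hLlap hLnn)
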